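/- Let e and e' be idempotents in a ring R with e ∼ e' (i.e., e'e = e' and ee' = e), and assume R carries a linear, Hausdorff ring topology. Assume e = ∑_{i∈I} g_i where (g_i)_{i∈I} is a summable family of pairwise orthogonal idempotents. Then (e'g_i)_{i∈I} is a summable family of pairwise orthogonal idempotents with g_i ∼ e'g_i for each i. Further, if u ∈ R satisfies e' = ue, then e'g_i = ug_i for each i. Finally, if f is any idempotent with ef = fe = 0, then fg_i = g_if = 0 for each i. -/

import Mathlib

/-- A ring topology is *linear* if `0` has a neighborhood basis consisting of left ideals. -/
def HasLinearTopology (R : Type*) [Ring R] [TopologicalSpace R] : Prop :=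
  ∀ U ∈ nhds (0 : R), ∃ I : Ideal R, (I : Set R) ∈ nhds (0 : R) ∧ (I : Set R) ⊆ U

/-- Lemma 3. Let `e ∼ e'` be left strongly isomorphic idempotents in a
ring with a linear Hausdorff topology, and let `e = ∑ᵢ g i` with `(g i)` a summable family
of pairwise orthogonal idempotents.  Then `(e' * g i)` is a summable family of pairwise
orthogonal idempotents with `g i ∼ e' * g i`; if `e' = u * e` then `e' * g i = u * g i`;
and any idempotent `f` orthogonal to `e` is orthogonal to each `g i`. -/
theorem strongly_isomorphic_idempotent_summands
    (R : Type*) [Ring R] [TopologicalSpace R] [IsTopologicalRing R] [T2Space R]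
    (hlin : HasLinearTopology R)
    {ι : Type*} (e e' : R) (he : IsIdempotentElem e) (he' : IsIdempotentElem e')
    (h₁ : e' * e = e') (h₂ : e * e' = e)
    (g : ι → R) (hg : ∀ i, IsIdempotentElem (g i))
    (horth : ∀ i j, i ≠ j → g i * g j = 0)
    (hsum : HasSum g e) :
    Summable (fun i => e' * g i) ∧
    (∀ i, IsIdempotentElem (e' * g i)) ∧
    (∀ i j, i ≠ j → (e' * g i) * (e' * g j) = 0) ∧
    (∀ i, (e' * g i) * g i = e' * g i ∧ g i * (e' * g i) = g i) ∧
    (∀ u : R, e' = u * e → ∀ i, e' * g i = u * g i) ∧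
    (∀ f : R, IsIdempotentElem f → e * f = 0 → f * e = 0 →
      ∀ i, f * g i = 0 ∧ g i * f = 0) := by
  classical
  have hge : ∀ i, g i * e = g i := by
    intro i
    have h1 : HasSum (fun j => g i * g j) (g i * e) := hsum.mul_left (g i)
    have h2 : HasSum (fun j => g i * g j) (g i) := by
      refine (hasSum_ite_eq i (g i)).congr_fun fun j => ?_
      by_cases h : j = i
      · subst h; simp only [if_pos rfl]; exact hg j
      · simp [h, horth i j (Ne.symm h)]
    exact h1.unique h2
  have heg : ∀ i, e * g i = g i := by
    intro i
    have h1 : HasSum (fun j => g j * g i) (e * g i) := hsum.mul_right (g i)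
    have h2 : HasSum (fun j => g j * g i) (g i) := by
      refine (hasSum_ite_eq i (g i)).congr_fun fun j => ?_
      by_cases h : j = i
      · subst h; simp only [if_pos rfl]; exact hg j
      · simp [h, horth j i h]
    exact h1.unique h2
  have hgie' : ∀ i, g i * e' = g i := by
    intro i
    calc g i * e' = g i * e * e' := by rw [hge i]
    _ = g i * (e * e') := by rw [mul_assoc]
    _ = g i * e := by rw [h₂]
    _ = g i := hge i
  refine ⟨(hsum.mul_left e').summable, ?_, ?_, ?_, ?_, ?_⟩
  · intro i
    show (e' * g i) * (e' * g i) = e' * g i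
    rw [mul_assoc, ← mul_assoc (g i), hgie' i, hg i]
  · intro i j hij
    rw [mul_assoc, ← mul_assoc (g i), hgie' i, horth i j hij, mul_zero]
  · intro i
    constructor
    · rw [mul_assoc, hg i]
    · rw [← mul_assoc, hgie' i, hg i]
  · intro u hu i
    rw [hu, mul_assoc, heg i]
  · intro f hf hef hfe i
    constructor
    · rw [← heg i, ← mul_assoc, hfe, zero_mul]
    · rw [← hge i, mul_assoc, hef, mul_zero]
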